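/- Envelope derivative of the minimum Bayes risk for the Gaussian model: fix σ > 0 and define V(p) = R(p, η*(p)) for p ∈ (0,1), where η*(p) = 1/2 + σ²·ln(p/(1−p)). Then V is differentiable on (0,1) and V'(p) = pI(η*(p)) − pII(η*(p)); the term involving the derivative of η* vanishes because η*(p) is a stationary point of η ↦ R(p, η). -/

import Mathlib

open MeasureTheory ProbabilityTheory Real Set

lemma continuous_gaussianPDFReal (m : ℝ) (v : NNReal) :
    Continuous (gaussianPDFReal m v) := by
  rw [gaussianPDFReal_def]
  continuity

lemma gauss_Iio_split (m : ℝ) (v : NNReal) (hv : v ≠ 0) (η : ℝ) :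
    ((gaussianReal m v) (Set.Iio η)).toReal
      = ((gaussianReal m v) (Set.Iio 0)).toReal
        + ∫ t in (0:ℝ)..η, gaussianPDFReal m v t := by
  rw [gaussianReal_apply_eq_integral m hv, gaussianReal_apply_eq_integral m hv,
    ENNReal.toReal_ofReal (setIntegral_nonneg measurableSet_Iio
      fun x _ => gaussianPDFReal_nonneg m v x),
    ENNReal.toReal_ofReal (setIntegral_nonneg measurableSet_Iio
      fun x _ => gaussianPDFReal_nonneg m v x),
    ← integral_Iic_eq_integral_Iio, ← integral_Iic_eq_integral_Iio]
  have h := intervalIntegral.integral_Iic_sub_Iic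
    ((integrable_gaussianPDFReal m v).integrableOn (s := Iic (0:ℝ)))
    ((integrable_gaussianPDFReal m v).integrableOn (s := Iic η))
  linarith [h]

lemma gauss_key (σ p : ℝ) (hσ : 0 < σ) (hp : 0 < p) (hp1 : p < 1) :
    p * gaussianPDFReal 0 ⟨σ ^ 2, sq_nonneg σ⟩ (1/2 + σ^2 * Real.log (p / (1-p)))
      = (1 - p) * gaussianPDFReal 1 ⟨σ ^ 2, sq_nonneg σ⟩ (1/2 + σ^2 * Real.log (p / (1-p))) := by
  have hp1' : 0 < 1 - p := by linarith
  have hσ2 : (0:ℝ) < σ^2 := by positivity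
  set L := Real.log (p / (1-p)) with hL
  set η := 1/2 + σ^2 * L with hη
  have hv : ((⟨σ ^ 2, sq_nonneg σ⟩ : NNReal) : ℝ) = σ^2 := rfl
  unfold gaussianPDFReal
  change p * ((√(2 * π * σ^2))⁻¹ * rexp (-(η - 0) ^ 2 / (2 * σ^2))) = (1 - p) * ((√(2 * π * σ^2))⁻¹ * rexp (-(η - 1) ^ 2 / (2 * σ^2)))
  have hexp : Real.exp L = p / (1-p) := Real.exp_log (by positivity)
  have hAB : -(η - 0)^2 / (2 * σ^2) = -(η - 1)^2 / (2 * σ^2) + -L := by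
    rw [hη]; field_simp; ring
  rw [hAB, Real.exp_add]
  have hexpneg : Real.exp (-L) = (1-p) / p := by
    rw [Real.exp_neg, hexp]; field_simp
  rw [hexpneg]
  field_simp

lemma etastar_deriv (σ p : ℝ) (hp : 0 < p) (hp1 : p < 1) :
    HasDerivAt (fun q : ℝ => 1 / 2 + σ ^ 2 * Real.log (q / (1 - q)))
      (σ ^ 2 / (p * (1 - p))) p := by
  have hp1' : 0 < 1 - p := by linarith
  have hu : HasDerivAt (fun q : ℝ => q / (1 - q))
      ((1 * (1 - p) - p * (-1)) / (1 - p)^2) p :=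
    (hasDerivAt_id p).div ((hasDerivAt_id p).const_sub 1) (by positivity)
  have hlog : HasDerivAt (fun q : ℝ => Real.log (q / (1 - q)))
      (((1 * (1 - p) - p * (-1)) / (1 - p)^2) / (p / (1 - p))) p :=
    hu.log (by positivity)
  have h := (hlog.const_mul (σ^2)).const_add (1/2 : ℝ)
  refine h.congr_deriv ?_
  field_simp
  ring

theorem gaussian_min_bayes_risk_envelope_derivative
    (σ : ℝ) (hσ : 0 < σ)
    (μ0 μ1 : Measure ℝ)
    (hμ0 : μ0 = gaussianReal 0 ⟨σ ^ 2, sq_nonneg σ⟩)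
    (hμ1 : μ1 = gaussianReal 1 ⟨σ ^ 2, sq_nonneg σ⟩)
    (pI pII : ℝ → ℝ)
    (hpI : ∀ η : ℝ, pI η = (μ0 {y : ℝ | η ≤ y}).toReal)
    (hpII : ∀ η : ℝ, pII η = (μ1 {y : ℝ | y < η}).toReal)
    (R : ℝ → ℝ → ℝ)
    (hR : ∀ p η : ℝ, R p η = p * pI η + (1 - p) * pII η)
    (ηstar : ℝ → ℝ)
    (hηstar : ∀ p : ℝ, ηstar p = 1 / 2 + σ ^ 2 * Real.log (p / (1 - p)))
    (V : ℝ → ℝ)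
    (hV : ∀ p : ℝ, V p = R p (ηstar p)) :
    ∀ p ∈ Set.Ioo (0 : ℝ) 1,
      HasDerivAt V (pI (ηstar p) - pII (ηstar p)) p := by
  intro p hp
  obtain ⟨hp0, hp1⟩ := hp
  have hp1' : 0 < 1 - p := by linarith
  set v : NNReal := ⟨σ ^ 2, sq_nonneg σ⟩ with hv
  have hvne : v ≠ 0 := by
    intro h
    have : (v : ℝ) = 0 := by rw [h]; simp
    have hσ2 : (0:ℝ) < σ ^ 2 := by positivity
    rw [show (v:ℝ) = σ^2 from rfl] at this
    linarith
  set f0 := gaussianPDFReal 0 v with hf0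
  set f1 := gaussianPDFReal 1 v with hf1
  set C0 := ((gaussianReal 0 v) (Set.Iio 0)).toReal with hC0
  set C1 := ((gaussianReal 1 v) (Set.Iio 0)).toReal with hC1
  set g0 : ℝ → ℝ := fun η => ∫ t in (0:ℝ)..η, f0 t with hg0def
  set g1 : ℝ → ℝ := fun η => ∫ t in (0:ℝ)..η, f1 t with hg1def
  have hpIeq : ∀ η : ℝ, pI η = 1 - (C0 + g0 η) := by
    intro η
    rw [hpI, hμ0, show {y : ℝ | η ≤ y} = Set.Ici η from rfl,
      show Set.Ici η = (Set.Iio η)ᶜ from Set.compl_Iio.symm,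
      measure_compl measurableSet_Iio (measure_ne_top _ _), measure_univ,
      ENNReal.toReal_sub_of_le prob_le_one ENNReal.one_ne_top, ENNReal.toReal_one,
      gauss_Iio_split 0 v hvne]
  have hpIIeq : ∀ η : ℝ, pII η = C1 + g1 η := by
    intro η
    rw [hpII, hμ1, show {y : ℝ | y < η} = Set.Iio η from rfl, gauss_Iio_split 1 v hvne]
  have hVeq : V = fun q : ℝ =>
      q * (1 - (C0 + g0 (ηstar q))) + (1 - q) * (C1 + g1 (ηstar q)) := by
    funext q
    rw [hV, hR, hpIeq, hpIIeq]
  set d : ℝ := σ ^ 2 / (p * (1 - p)) with hd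
  have hηd : HasDerivAt ηstar d p := by
    have h := etastar_deriv σ p hp0 hp1
    have : ηstar = fun q : ℝ => 1 / 2 + σ ^ 2 * Real.log (q / (1 - q)) := funext hηstar
    rw [this]
    exact h
  have hg0' : HasDerivAt g0 (f0 (ηstar p)) (ηstar p) :=
    intervalIntegral.integral_hasDerivAt_right
      ((integrable_gaussianPDFReal 0 v).intervalIntegrable)
      ((continuous_gaussianPDFReal 0 v).stronglyMeasurable.stronglyMeasurableAtFilter)
      (continuous_gaussianPDFReal 0 v).continuousAt
  have hg1' : HasDerivAt g1 (f1 (ηstar p)) (ηstar p) :=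
    intervalIntegral.integral_hasDerivAt_right
      ((integrable_gaussianPDFReal 1 v).intervalIntegrable)
      ((continuous_gaussianPDFReal 1 v).stronglyMeasurable.stronglyMeasurableAtFilter)
      (continuous_gaussianPDFReal 1 v).continuousAt
  have hG0 : HasDerivAt (fun q => g0 (ηstar q)) (f0 (ηstar p) * d) p := hg0'.comp p hηd
  have hG1 : HasDerivAt (fun q => g1 (ηstar q)) (f1 (ηstar p) * d) p := hg1'.comp p hηd
  have hterm1 : HasDerivAt (fun q : ℝ => q * (1 - (C0 + g0 (ηstar q))))
      (1 * (1 - (C0 + g0 (ηstar p))) + p * (-(f0 (ηstar p) * d))) p :=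
    (hasDerivAt_id p).mul ((hG0.const_add C0).const_sub 1)
  have hterm2 : HasDerivAt (fun q : ℝ => (1 - q) * (C1 + g1 (ηstar q)))
      ((-1) * (C1 + g1 (ηstar p)) + (1 - p) * (f1 (ηstar p) * d)) p := by
    have h1 : HasDerivAt (fun q : ℝ => 1 - q) (-1 : ℝ) p := by
      simpa using (hasDerivAt_id p).const_sub 1
    exact h1.mul (hG1.const_add C1)
  have hsum := hterm1.add hterm2
  rw [hVeq]
  have hke : p * f0 (ηstar p) = (1 - p) * f1 (ηstar p) := by
    rw [hηstar, hf0, hf1, hv]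
    exact gauss_key σ p hσ hp0 hp1
  have hder : pI (ηstar p) - pII (ηstar p)
      = 1 * (1 - (C0 + g0 (ηstar p))) + p * (-(f0 (ηstar p) * d))
        + ((-1) * (C1 + g1 (ηstar p)) + (1 - p) * (f1 (ηstar p) * d)) := by
    rw [hpIeq, hpIIeq]
    linear_combination d * hke
  rw [hder]
  exact hsum
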